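/- (Descending Ekeland variational principle.) Let (X,d) be a complete metric space and φ : X → ℝ ∪ {+∞} be proper (Dom(φ) := {x : φ(x) < +∞} is nonempty), bounded below, and descending d-lsc. Then for each u ∈ Dom(φ) there exists v ∈ Dom(φ) such that: (i) d(u,v) ≤ φ(u) − φ(v); and (ii) for every x ∈ X with x ≠ v one has d(v,x) + φ(x) > φ(v) (in the extended reals). -/

import Mathlib

/-- Descending Ekeland variational principle: on a complete metric space `(X, d)`, for a
proper, bounded below, descending `d`-lsc function `φ : X → ℝ ∪ {+∞}`, each `u ∈ Dom(φ)`
admits a point `v ∈ Dom(φ)` with `d(u, v) ≤ φ u − φ v`, and such that every `x ≠ v`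
satisfies `d(v, x) + φ x > φ v`. -/
theorem stmt_17 {X : Type*} [MetricSpace X] [CompleteSpace X]
    (φ : X → EReal)
    (hne_bot : ∀ x, φ x ≠ ⊥)
    (hproper : ∃ x, φ x ≠ ⊤)
    (hbdd : ∃ c : ℝ, ∀ x, (c : EReal) ≤ φ x)
    (hlsc : ∀ x : ℕ → X, ∀ l : X,
      Filter.Tendsto x Filter.atTop (nhds l) →
      (∀ n, φ (x (n + 1)) ≤ φ (x n)) → ∀ n, φ l ≤ φ (x n)) :
    ∀ u, φ u ≠ ⊤ →
      ∃ v, φ v ≠ ⊤ ∧ (dist u v : EReal) ≤ φ u - φ v ∧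
        ∀ x, x ≠ v → φ v < (dist v x : EReal) + φ x := by
  intro u hu
  obtain ⟨c, hc⟩ := hbdd
  set S : X → Set X := fun x => {y | (dist x y : EReal) + φ y ≤ φ x} with hSdef
  have hmemS : ∀ x y, y ∈ S x ↔ (dist x y : EReal) + φ y ≤ φ x := fun x y => Iff.rfl
  have hself : ∀ x, x ∈ S x := by
    intro x; rw [hmemS]; simp
  have hle : ∀ x y, y ∈ S x → φ y ≤ φ x := by
    intro x y hy
    calc φ y = 0 + φ y := (zero_add _).symm
    _ ≤ (dist x y : EReal) + φ y := by
        apply add_le_add_left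
        exact_mod_cast dist_nonneg
    _ ≤ φ x := hy
  have hfin : ∀ x y, φ x ≠ ⊤ → y ∈ S x → φ y ≠ ⊤ := by
    intro x y hx hy
    exact fun h => hx (top_le_iff.1 (h ▸ hle x y hy))
  have hmono : ∀ x y, y ∈ S x → S y ⊆ S x := by
    intro x y hy z hz
    rw [hmemS] at *
    calc (dist x z : EReal) + φ z
        ≤ ((dist x y + dist y z : ℝ) : EReal) + φ z := by
          apply add_le_add_left; exact_mod_cast dist_triangle x y z
      _ = (dist x y : EReal) + ((dist y z : EReal) + φ z) := by
          rw [EReal.coe_add, add_assoc]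
      _ ≤ (dist x y : EReal) + φ y := add_le_add_right hz _
      _ ≤ φ x := hy
  set m : X → EReal := fun x => sInf (φ '' S x) with hmdef
  have hmc : ∀ x, (c : EReal) ≤ m x := by
    intro x; apply le_sInf; rintro b ⟨y, -, rfl⟩; exact hc y
  have hmle : ∀ x, m x ≤ φ x := fun x => sInf_le ⟨x, hself x, rfl⟩
  have hstep : ∀ x : X, φ x ≠ ⊤ → ∀ n : ℕ, ∃ y, y ∈ S x ∧ φ y < m x + (((1/2:ℝ)^n : ℝ) : EReal) := by
    intro x hx n
    have hmt : m x ≠ ⊤ := fun h => hx (top_le_iff.1 (h ▸ hmle x))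
    have hmb : m x ≠ ⊥ := fun h => by simpa [h] using hmc x
    lift m x to ℝ using ⟨hmt, hmb⟩ with r hr
    have : sInf (φ '' S x) < (r : EReal) + (((1/2:ℝ)^n : ℝ) : EReal) := by
      have hr' : sInf (φ '' S x) = (r : EReal) := hr.symm
      rw [hr', ← EReal.coe_add, EReal.coe_lt_coe_iff]
      have : (0:ℝ) < (1/2)^n := by positivity
      linarith
    obtain ⟨b, ⟨y, hy, rfl⟩, hb⟩ := sInf_lt_iff.1 this
    exact ⟨y, hy, hb⟩
  -- construct the sequence
  have hnext : ∀ p : {x : X // φ x ≠ ⊤}, ∀ n : ℕ,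
      ∃ y : {x : X // φ x ≠ ⊤}, y.1 ∈ S p.1 ∧ φ y.1 < m p.1 + (((1/2:ℝ)^n : ℝ) : EReal) := by
    intro p n
    obtain ⟨y, hy1, hy2⟩ := hstep p.1 p.2 n
    exact ⟨⟨y, hfin p.1 y p.2 hy1⟩, hy1, hy2⟩
  choose nxt hnxt1 hnxt2 using hnext
  set g : ℕ → {x : X // φ x ≠ ⊤} := fun n => Nat.rec ⟨u, hu⟩ (fun k p => nxt p k) n with hgdef
  set f : ℕ → X := fun n => (g n).1 with hfdef
  have hf0 : f 0 = u := rfl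
  have hfS : ∀ n, f (n+1) ∈ S (f n) := fun n => hnxt1 (g n) n
  have hflt : ∀ n, φ (f (n+1)) < m (f n) + (((1/2:ℝ)^n : ℝ) : EReal) := fun n => hnxt2 (g n) n
  have hftop : ∀ n, φ (f n) ≠ ⊤ := fun n => (g n).2
  have hchain : ∀ n k, f (n + k) ∈ S (f n) := by
    intro n k
    induction k with
    | zero => exact hself (f n)
    | succ k ih => exact hmono _ _ ih (hfS (n + k))
  have hchain' : ∀ n j, n ≤ j → f j ∈ S (f n) := by
    intro n j hnj
    obtain ⟨k, rfl⟩ := Nat.exists_eq_add_of_le hnj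
    exact hchain n k
  have hdec : ∀ n, φ (f (n+1)) ≤ φ (f n) := fun n => hle _ _ (hfS n)
  -- small diameter
  have hsmall : ∀ n z, z ∈ S (f (n+1)) → dist (f (n+1)) z ≤ (1/2:ℝ)^n := by
    intro n z hz
    have hzfin : φ z ≠ ⊤ := hfin _ _ (hftop (n+1)) hz
    have hzbot : φ z ≠ ⊥ := hne_bot z
    have h1 : (dist (f (n+1)) z : EReal) + φ z ≤ φ (f (n+1)) := hz
    have h2 : m (f n) ≤ φ z := sInf_le ⟨z, hmono _ _ (hfS n) hz, rfl⟩
    have h3 : (dist (f (n+1)) z : EReal) + φ z < φ z + (((1/2:ℝ)^n : ℝ) : EReal) := by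
      calc (dist (f (n+1)) z : EReal) + φ z ≤ φ (f (n+1)) := h1
      _ < m (f n) + (((1/2:ℝ)^n : ℝ) : EReal) := hflt n
      _ ≤ φ z + (((1/2:ℝ)^n : ℝ) : EReal) := add_le_add_left h2 _
    lift φ z to ℝ using ⟨hzfin, hzbot⟩ with r hr
    rw [← EReal.coe_add, ← EReal.coe_add, EReal.coe_lt_coe_iff] at h3
    linarith
  -- Cauchy
  have hcau : CauchySeq f := by
    apply cauchySeq_of_le_geometric (1/2 : ℝ) (max (dist (f 0) (f 1)) 2) (by norm_num)
    intro n
    match n with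
    | 0 => simpa using le_max_left _ _
    | (k+1) =>
      have := hsmall k (f (k+2)) (hfS (k+1))
      calc dist (f (k+1)) (f (k+2)) ≤ (1/2:ℝ)^k := this
      _ = 2 * (1/2:ℝ)^(k+1) := by ring
      _ ≤ max (dist (f 0) (f 1)) 2 * (1/2:ℝ)^(k+1) := by
          apply mul_le_mul_of_nonneg_right (le_max_right _ _) (by positivity)
  obtain ⟨v, hv⟩ := cauchySeq_tendsto_of_complete hcau
  have hφv : ∀ n, φ v ≤ φ (f n) := hlsc f v hv hdec
  have hvtop : φ v ≠ ⊤ := fun h => hftop 0 (top_le_iff.1 (h ▸ hφv 0))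
  have hvbot : φ v ≠ ⊥ := hne_bot v
  -- v ∈ S (f n) for all n
  have hvS : ∀ n, v ∈ S (f n) := by
    intro n
    obtain ⟨a, ha⟩ : ∃ a : ℝ, φ v = (a : EReal) := ⟨(φ v).toReal, (EReal.coe_toReal hvtop hvbot).symm⟩
    obtain ⟨b, hb⟩ : ∃ b : ℝ, φ (f n) = (b : EReal) :=
      ⟨(φ (f n)).toReal, (EReal.coe_toReal (hftop n) (hne_bot _)).symm⟩
    have key : ∀ j, n ≤ j → dist (f n) (f j) + a ≤ b := by
      intro j hj
      have h1 : (dist (f n) (f j) : EReal) + φ v ≤ φ (f n) := by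
        calc (dist (f n) (f j) : EReal) + φ v
            ≤ (dist (f n) (f j) : EReal) + φ (f j) := add_le_add_right (hφv j) _
          _ ≤ φ (f n) := hchain' n j hj
      rw [ha, hb, ← EReal.coe_add, EReal.coe_le_coe_iff] at h1
      exact h1
    have hlim : Filter.Tendsto (fun j => dist (f n) (f j) + a) Filter.atTop
        (nhds (dist (f n) v + a)) := by
      have : Filter.Tendsto (fun j => dist (f n) (f j)) Filter.atTop (nhds (dist (f n) v)) :=
        (Continuous.tendsto (continuous_const.dist continuous_id) v).comp hv
      simpa using this.add tendsto_const_nhds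
    have : dist (f n) v + a ≤ b :=
      le_of_tendsto hlim (Filter.eventually_atTop.2 ⟨n, key⟩)
    rw [hmemS, ha, hb, ← EReal.coe_add, EReal.coe_le_coe_iff]
    exact this
  refine ⟨v, hvtop, ?_, ?_⟩
  · have := hvS 0
    rw [hmemS, hf0] at this
    exact (EReal.le_sub_iff_add_le (Or.inl hvbot) (Or.inl hvtop)).2 this
  · intro x hx
    by_contra hcon
    push_neg at hcon
    have hxSv : x ∈ S v := hcon
    have hdx : ∀ n, dist (f (n+1)) x ≤ (1/2:ℝ)^n := by
      intro n
      exact hsmall n x (hmono _ _ (hvS (n+1)) hxSv)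
    have hdvx : dist v x ≤ 0 := by
      have h1 : Filter.Tendsto (fun n : ℕ => dist v (f (n+1)) + (1/2:ℝ)^n) Filter.atTop (nhds 0) := by
        have hd : Filter.Tendsto (fun n : ℕ => dist v (f (n+1))) Filter.atTop (nhds 0) := by
          have := (hv.comp (Filter.tendsto_add_atTop_nat 1))
          simpa [dist_comm] using (tendsto_iff_dist_tendsto_zero.1 this)
        have hg : Filter.Tendsto (fun n : ℕ => (1/2:ℝ)^n) Filter.atTop (nhds 0) :=
          tendsto_pow_atTop_nhds_zero_of_lt_one (by norm_num) (by norm_num)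
        simpa using hd.add hg
      apply ge_of_tendsto h1
      filter_upwards with n
      calc dist v x ≤ dist v (f (n+1)) + dist (f (n+1)) x := dist_triangle _ _ _
      _ ≤ dist v (f (n+1)) + (1/2:ℝ)^n := by linarith [hdx n]
    exact hx (dist_le_zero.1 (by linarith [dist_nonneg (x := v) (y := x)])).symm
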